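/- arXiv:2211.04651 — 5 statements merged into one kernel-verified Lean document; each statement's English description precedes it below -/
import Mathlib

section
/- Let a and s be configurations such that for every i ∈ ℤ the set {P[s](j) − P[a](j) : j ≤ i} is bounded above (equivalently, (a,s) has finite queue lengths). Then for every i ∈ ℤ, P[D(a,s)](i) = P[s](i) + sup_{j ≤ 0} (P[s](j) − P[a](j)) − sup_{j ≤ i} (P[s](j) − P[a](j)). -/
open scoped BigOperators

/-- A particle configuration on `ℤ`: a `{0,1}`-valued function. -/
abbrev Config := ℤ → ℤ

/-- `x` takes only the values `0` and `1`. -/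
def IsConfig (x : Config) : Prop := ∀ i, x i = 0 ∨ x i = 1

/-- `x[i,j] = ∑_{k=i}^j x(k)` (zero if `j < i`). -/
noncomputable def cnt (x : Config) (i j : ℤ) : ℤ := ∑ k ∈ Finset.Icc i j, x k

/-- The queue length `Q_i(a,s) = sup_{j ≤ i} max(a[j,i] - s[j,i], 0)`. -/
noncomputable def queue (a s : Config) (i : ℤ) : ℤ :=
  sSup {q : ℤ | ∃ j ≤ i, q = max (cnt a j i - cnt s j i) 0}

/-- The departure configuration `D(a,s)`. -/
noncomputable def dep (a s : Config) : Config := fun i =>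
  if s i = 1 ∧ (0 < queue a s (i - 1) ∨ a i = 1) then 1 else 0

/-- The height function `P[x]`. -/
noncomputable def Pmap (x : Config) : ℤ → ℤ := fun i =>
  if 0 ≤ i then ∑ j ∈ Finset.Ico (0 : ℤ) i, (2 * x j - 1)
  else -∑ j ∈ Finset.Ico i (0 : ℤ), (2 * x j - 1)

/- ### Auxiliary material -/

lemma sum_Ico_split (f : ℤ → ℤ) {m n k : ℤ} (h1 : m ≤ n) (h2 : n ≤ k) :
    ∑ j ∈ Finset.Ico m n, f j + ∑ j ∈ Finset.Ico n k, f j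
      = ∑ j ∈ Finset.Ico m k, f j := by
  rw [← Finset.sum_union (Finset.Ico_disjoint_Ico_consecutive m n k),
    Finset.Ico_union_Ico_eq_Ico h1 h2]

lemma Icc_eq_Ico (j i : ℤ) : Finset.Icc j i = Finset.Ico j (i + 1) := by
  ext k; simp [Finset.mem_Icc, Finset.mem_Ico]

lemma Pmap_sub (x : Config) {j m : ℤ} (h : j ≤ m) :
    Pmap x m - Pmap x j = ∑ k ∈ Finset.Ico j m, (2 * x k - 1) := by
  unfold Pmap
  rcases le_or_gt 0 j with hj | hj
  · rw [if_pos hj, if_pos (hj.trans h), ← sum_Ico_split _ hj h]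
    ring
  · rw [if_neg (not_le.mpr hj)]
    rcases le_or_gt 0 m with hm | hm
    · rw [if_pos hm, ← sum_Ico_split _ hj.le hm]
      ring
    · rw [if_neg (not_le.mpr hm), ← sum_Ico_split _ h hm.le]
      ring

lemma Pmap_step (x : Config) (i : ℤ) :
    Pmap x (i + 1) = Pmap x i + (2 * x i - 1) := by
  have h := Pmap_sub x (le_of_lt (lt_add_one i))
  rw [show Finset.Ico i (i + 1) = {i} by ext k; simp [Finset.mem_Ico]; omega,
    Finset.sum_singleton] at h
  linarith

lemma cnt_diff (a s : Config) {j i : ℤ} (h : j ≤ i + 1) :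
    2 * (cnt a j i - cnt s j i)
      = (Pmap s j - Pmap a j) - (Pmap s (i + 1) - Pmap a (i + 1)) := by
  have hA := Pmap_sub a h
  have hS := Pmap_sub s h
  have hsum : ∑ k ∈ Finset.Ico j (i + 1), (2 * a k - 1)
      - ∑ k ∈ Finset.Ico j (i + 1), (2 * s k - 1)
      = 2 * ∑ k ∈ Finset.Ico j (i + 1), a k
        - 2 * ∑ k ∈ Finset.Ico j (i + 1), s k := by
    rw [← Finset.sum_sub_distrib, Finset.mul_sum, Finset.mul_sum,
      ← Finset.sum_sub_distrib]
    exact Finset.sum_congr rfl fun k _ => by ring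
  unfold cnt
  rw [Icc_eq_Ico]
  linarith

noncomputable def fsup (a s : Config) (i : ℤ) : ℤ :=
  sSup {v : ℤ | ∃ j ≤ i, v = Pmap s j - Pmap a j}

lemma fset_nonempty (a s : Config) (i : ℤ) :
    {v : ℤ | ∃ j ≤ i, v = Pmap s j - Pmap a j}.Nonempty :=
  ⟨Pmap s i - Pmap a i, i, le_refl i, rfl⟩

lemma le_fsup (a s : Config)
    (hbdd : ∀ i : ℤ, BddAbove {v : ℤ | ∃ j ≤ i, v = Pmap s j - Pmap a j})
    {j i : ℤ} (h : j ≤ i) : Pmap s j - Pmap a j ≤ fsup a s i :=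
  le_csSup (hbdd i) ⟨j, h, rfl⟩

lemma fsup_mem (a s : Config)
    (hbdd : ∀ i : ℤ, BddAbove {v : ℤ | ∃ j ≤ i, v = Pmap s j - Pmap a j})
    (i : ℤ) : ∃ j ≤ i, fsup a s i = Pmap s j - Pmap a j :=
  Int.csSup_mem (fset_nonempty a s i) (hbdd i)

lemma fsup_succ (a s : Config)
    (hbdd : ∀ i : ℤ, BddAbove {v : ℤ | ∃ j ≤ i, v = Pmap s j - Pmap a j})
    (i : ℤ) :
    fsup a s (i + 1) = max (fsup a s i) (Pmap s (i + 1) - Pmap a (i + 1)) := by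
  apply le_antisymm
  · apply csSup_le (fset_nonempty a s (i + 1))
    rintro v ⟨j, hj, rfl⟩
    rcases le_or_gt j i with h | h
    · exact le_trans (le_fsup a s hbdd h) (le_max_left _ _)
    · have : j = i + 1 := by omega
      subst this
      exact le_max_right _ _
  · apply max_le
    · apply csSup_le (fset_nonempty a s i)
      rintro v ⟨j, hj, rfl⟩
      exact le_fsup a s hbdd (by omega)
    · exact le_fsup a s hbdd (le_refl _)

lemma queue_eq (a s : Config)
    (hbdd : ∀ i : ℤ, BddAbove {v : ℤ | ∃ j ≤ i, v = Pmap s j - Pmap a j})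
    (i : ℤ) :
    2 * queue a s i = fsup a s (i + 1) - (Pmap s (i + 1) - Pmap a (i + 1)) := by
  set g1 := Pmap s (i + 1) - Pmap a (i + 1) with hg1
  have hg1le : g1 ≤ fsup a s (i + 1) := le_fsup a s hbdd (le_refl _)
  obtain ⟨j0, hj0, hfe⟩ := fsup_mem a s hbdd (i + 1)
  rcases le_or_gt j0 i with hji | hji
  · -- sup attained at j0 ≤ i
    set c := cnt a j0 i - cnt s j0 i with hc
    have h2c : 2 * c = fsup a s (i + 1) - g1 := by
      rw [hc, cnt_diff a s (by omega : j0 ≤ i + 1), ← hfe]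
    have hc0 : 0 ≤ c := by linarith
    have hmem : c ∈ {q : ℤ | ∃ j ≤ i, q = max (cnt a j i - cnt s j i) 0} :=
      ⟨j0, hji, (max_eq_left hc0).symm⟩
    have hub : ∀ q ∈ {q : ℤ | ∃ j ≤ i, q = max (cnt a j i - cnt s j i) 0},
        q ≤ c := by
      rintro q ⟨j, hj, rfl⟩
      have h2 : 2 * (cnt a j i - cnt s j i)
          = (Pmap s j - Pmap a j) - g1 := cnt_diff a s (by omega)
      have hle : Pmap s j - Pmap a j ≤ fsup a s (i + 1) :=
        le_fsup a s hbdd (by omega)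
      exact max_le (by linarith) hc0
    have : queue a s i = c := IsGreatest.csSup_eq ⟨hmem, hub⟩
    rw [this, h2c]
  · -- sup attained at j0 = i + 1, so fsup (i+1) = g1
    have hj0' : j0 = i + 1 := by omega
    subst hj0'
    have hF : fsup a s (i + 1) = g1 := hfe
    have hub : ∀ q ∈ {q : ℤ | ∃ j ≤ i, q = max (cnt a j i - cnt s j i) 0},
        q ≤ 0 := by
      rintro q ⟨j, hj, rfl⟩
      have h2 : 2 * (cnt a j i - cnt s j i)
          = (Pmap s j - Pmap a j) - g1 := cnt_diff a s (by omega)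
      have hle : Pmap s j - Pmap a j ≤ fsup a s (i + 1) :=
        le_fsup a s hbdd (by omega)
      exact max_le (by linarith) (le_refl _)
    have hmem : (0 : ℤ) ∈ {q : ℤ | ∃ j ≤ i, q = max (cnt a j i - cnt s j i) 0} := by
      refine ⟨i, le_refl i, ?_⟩
      have h2 : 2 * (cnt a i i - cnt s i i)
          = (Pmap s i - Pmap a i) - g1 := cnt_diff a s (by omega)
      have hle : Pmap s i - Pmap a i ≤ fsup a s (i + 1) :=
        le_fsup a s hbdd (by omega)
      exact (max_eq_right (by linarith)).symm
    have : queue a s i = 0 := IsGreatest.csSup_eq ⟨hmem, hub⟩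
    rw [this, hF]
    ring

lemma step_lemma (a s : Config) (ha : IsConfig a) (hs : IsConfig s)
    (hbdd : ∀ i : ℤ, BddAbove {v : ℤ | ∃ j ≤ i, v = Pmap s j - Pmap a j})
    (i : ℤ) :
    2 * dep a s i + fsup a s (i + 1) = 2 * s i + fsup a s i := by
  have hQ : 2 * queue a s (i - 1) = fsup a s i - (Pmap s i - Pmap a i) := by
    have h := queue_eq a s hbdd (i - 1)
    rw [show i - 1 + 1 = i by ring] at h
    exact h
  have hg : Pmap s (i + 1) - Pmap a (i + 1)
      = (Pmap s i - Pmap a i) + 2 * s i - 2 * a i := by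
    have h1 := Pmap_step s i
    have h2 := Pmap_step a i
    linarith
  have hmax := fsup_succ a s hbdd i
  have hge : Pmap s i - Pmap a i ≤ fsup a s i := le_fsup a s hbdd (le_refl i)
  rcases hs i with hs0 | hs1
  · -- s i = 0 : no departure, sup unchanged
    have hd : dep a s i = 0 := by simp [dep, hs0]
    have haux : Pmap s (i + 1) - Pmap a (i + 1) ≤ fsup a s i := by
      rcases ha i with h | h <;> omega
    rw [hmax, max_eq_left haux, hd, hs0]
  · rcases ha i with ha0 | ha1
    · by_cases hq : 0 < queue a s (i - 1)
      · -- departure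
        have hd : dep a s i = 1 := by simp [dep, hs1, hq]
        have haux : Pmap s (i + 1) - Pmap a (i + 1) ≤ fsup a s i := by omega
        rw [hmax, max_eq_left haux, hd, hs1]
      · -- empty queue, no arrival: no departure, sup increases by 2
        have hd : dep a s i = 0 := by simp [dep, hs1, hq, ha0]
        have hq0 : queue a s (i - 1) = 0 := by omega
        have haux : fsup a s i ≤ Pmap s (i + 1) - Pmap a (i + 1) := by omega
        rw [hmax, max_eq_right haux, hd, hs1]
        omega
    · -- arrival and service: departure, sup unchanged
      have hd : dep a s i = 1 := by simp [dep, hs1, ha1]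
      have haux : Pmap s (i + 1) - Pmap a (i + 1) ≤ fsup a s i := by omega
      rw [hmax, max_eq_left haux, hd, hs1]

/-- If for every `i` the set `{P[s](j) − P[a](j) : j ≤ i}` is bounded above
(equivalently, `(a,s)` has finite queue lengths), then for every `i`,
`P[D(a,s)](i) = P[s](i) + sup_{j ≤ 0}(P[s](j) − P[a](j)) − sup_{j ≤ i}(P[s](j) − P[a](j))`. -/
theorem stmt0 (a s : Config) (ha : IsConfig a) (hs : IsConfig s)
    (hbdd : ∀ i : ℤ, BddAbove {v : ℤ | ∃ j ≤ i, v = Pmap s j - Pmap a j}) :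
    ∀ i : ℤ,
      Pmap (dep a s) i =
        Pmap s i + sSup {v : ℤ | ∃ j ≤ (0 : ℤ), v = Pmap s j - Pmap a j}
          - sSup {v : ℤ | ∃ j ≤ i, v = Pmap s j - Pmap a j} := by
  intro i
  show Pmap (dep a s) i = Pmap s i + fsup a s 0 - fsup a s i
  induction i using Int.induction_on with
  | zero =>
      have h1 : Pmap (dep a s) 0 = 0 := by simp [Pmap]
      have h2 : Pmap s 0 = 0 := by simp [Pmap]
      rw [h1, h2]; ring
  | succ n ih =>
      have hstep := step_lemma a s ha hs hbdd (n : ℤ)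
      have h1 := Pmap_step (dep a s) (n : ℤ)
      have h2 := Pmap_step s (n : ℤ)
      push_cast at ih
      linarith
  | pred n ih =>
      have hstep := step_lemma a s ha hs hbdd (-(n : ℤ) - 1)
      have h1 := Pmap_step (dep a s) (-(n : ℤ) - 1)
      have h2 := Pmap_step s (-(n : ℤ) - 1)
      rw [show (-(n : ℤ) - 1) + 1 = -(n : ℤ) by ring] at hstep h1 h2
      push_cast at ih
      linarith
end

section
/- Let a and s be configurations such that (a,s) has finite queue lengths. Then for all integers j ≤ i, D(a,s)[j,i] = Q_{j−1}(a,s) − Q_i(a,s) + a[j,i]. -/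
open scoped BigOperators

/-- `(a,s)` has finite queue lengths. -/
def FinQ (a s : Config) : Prop :=
  ∀ i : ℤ, BddAbove {v : ℤ | ∃ j ≤ i, v = cnt a j i - cnt s j i}

/-- The unused-service configuration `U(a,s)`. -/
noncomputable def unusedSrv (a s : Config) : Config := fun i =>
  if s i = 1 ∧ queue a s (i - 1) = 0 ∧ a i = 0 then 1 else 0

/-- `R(a,s)(i) = a(i) + U(a,s)(i)`. -/
noncomputable def Rmap (a s : Config) : Config := fun i => a i + unusedSrv a s i

/-- Truncation: `x_{n,0}(i) = x(i)` for `i ≥ n`, `0` otherwise. -/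
def trunc (x : Config) (n : ℤ) : Config := fun i => if n ≤ i then x i else 0

/-- Left-peeling tandem queue: `Dtandem x [s₁,…,s_k] = D(…D(D(x,s₁),s₂)…,s_k)`. -/
noncomputable def Dtandem : Config → List Config → Config
  | x, [] => x
  | x, s :: rest => Dtandem (dep x s) rest

/-- `DtandemList [x₁,…,xₙ] = Dⁿ(x₁,…,xₙ)`. -/
noncomputable def DtandemList : List Config → Config
  | [] => fun _ => 0
  | x :: rest => Dtandem x rest

/-- `DtandemN x = Dⁿ(x 0, …, x (n-1))`. -/
noncomputable def DtandemN {n : ℕ} (x : Fin n → Config) : Config :=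
  DtandemList (List.ofFn x)

/-- Every pair appearing as (arrivals, services) in the recursive definition of the
tandem departure map has finite queue lengths. -/
def TandemFinQ : List Config → Prop
  | [] => True
  | [_] => True
  | x :: s :: rest => FinQ x s ∧ TandemFinQ (dep x s :: rest)
  termination_by l => l.length

lemma qset_bdd (a s : Config) (hfq : FinQ a s) (i : ℤ) :
    BddAbove {q : ℤ | ∃ j ≤ i, q = max (cnt a j i - cnt s j i) 0} := by
  obtain ⟨B, hB⟩ := hfq i
  refine ⟨max B 0, ?_⟩
  rintro q ⟨j, hj, rfl⟩
  have : cnt a j i - cnt s j i ≤ B := hB ⟨j, hj, rfl⟩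
  exact max_le_max this le_rfl

lemma qset_nonempty (a s : Config) (i : ℤ) :
    {q : ℤ | ∃ j ≤ i, q = max (cnt a j i - cnt s j i) 0}.Nonempty :=
  ⟨max (cnt a i i - cnt s i i) 0, i, le_rfl, rfl⟩

lemma queue_nonneg (a s : Config) (hfq : FinQ a s) (i : ℤ) : 0 ≤ queue a s i := by
  have := le_csSup (qset_bdd a s hfq i) (qset_nonempty a s i).choose_spec
  refine le_trans ?_ this
  obtain ⟨j, hj, hq⟩ := (qset_nonempty a s i).choose_spec
  rw [hq]; exact le_max_right _ _

lemma cnt_succ (x : Config) {j i : ℤ} (h : j ≤ i + 1) :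
    cnt x j (i + 1) = cnt x j i + x (i + 1) := by
  unfold cnt
  have : Finset.Icc j (i + 1) = insert (i + 1) (Finset.Icc j i) := by
    ext k; simp [Finset.mem_Icc]; omega
  rw [this, Finset.sum_insert (by simp [Finset.mem_Icc])]
  ring

lemma cnt_self (x : Config) (i : ℤ) : cnt x i i = x i := by
  simp [cnt]

lemma queue_rec (a s : Config) (hfq : FinQ a s) (i : ℤ) :
    queue a s i = max (queue a s (i - 1) + a i - s i) 0 := by
  set Q := queue a s (i - 1) with hQ
  have hQ0 : 0 ≤ Q := queue_nonneg a s hfq (i - 1)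
  have hmem : ∀ j ≤ i, max (cnt a j i - cnt s j i) 0 ≤ queue a s i := fun j hj =>
    le_csSup (qset_bdd a s hfq i) ⟨j, hj, rfl⟩
  have hsplit : ∀ j ≤ i - 1,
      cnt a j i - cnt s j i = (cnt a j (i-1) - cnt s j (i-1)) + (a i - s i) := by
    intro j hj
    have h1 : j ≤ (i - 1) + 1 := by omega
    have e : (i - 1) + 1 = i := by ring
    rw [← e, cnt_succ a h1, cnt_succ s h1]
    ring
  -- queue i is attained
  obtain ⟨j₁, hj₁, hq1⟩ := Int.csSup_mem (qset_nonempty a s i) (qset_bdd a s hfq i)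
  obtain ⟨j₂, hj₂, hq2⟩ := Int.csSup_mem (qset_nonempty a s (i-1)) (qset_bdd a s hfq (i-1))
  apply le_antisymm
  · -- queue i ≤ max (Q + a i - s i) 0
    rw [show queue a s i = max (cnt a j₁ i - cnt s j₁ i) 0 from hq1]
    rcases lt_or_ge j₁ i with h | h
    · have hj' : j₁ ≤ i - 1 := by omega
      have := hsplit j₁ hj'
      have hle : cnt a j₁ (i-1) - cnt s j₁ (i-1) ≤ Q := by
        refine le_trans (le_max_left _ 0) ?_
        exact le_csSup (qset_bdd a s hfq (i-1)) ⟨j₁, hj', rfl⟩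
      have : cnt a j₁ i - cnt s j₁ i ≤ Q + a i - s i := by omega
      omega
    · have : j₁ = i := le_antisymm hj₁ h
      subst this
      rw [cnt_self, cnt_self]
      have : a j₁ - s j₁ ≤ Q + a j₁ - s j₁ := by omega
      omega
  · -- max (Q + a i - s i) 0 ≤ queue i
    have h0 : (0:ℤ) ≤ queue a s i := queue_nonneg a s hfq i
    rcases eq_or_lt_of_le hQ0 with hQz | hQpos
    · -- Q = 0
      have := hmem i le_rfl
      rw [cnt_self, cnt_self] at this
      have : max (a i - s i) 0 ≤ queue a s i := this
      omega
    · -- Q > 0, so Q = raw value at j₂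
      have hq2' : queue a s (i-1) = max (cnt a j₂ (i-1) - cnt s j₂ (i-1)) 0 := hq2
      have hraw : Q = cnt a j₂ (i-1) - cnt s j₂ (i-1) := by
        rw [hQ, hq2']
        rcases le_or_gt (cnt a j₂ (i-1) - cnt s j₂ (i-1)) 0 with h | h
        · exfalso; rw [hQ, hq2'] at hQpos; omega
        · exact max_eq_left h.le
      have hj' : j₂ ≤ i := by omega
      have := hmem j₂ hj'
      have hs := hsplit j₂ hj₂
      have : Q + a i - s i ≤ queue a s i := by
        calc Q + a i - s i = cnt a j₂ i - cnt s j₂ i := by omega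
        _ ≤ max (cnt a j₂ i - cnt s j₂ i) 0 := le_max_left _ _
        _ ≤ queue a s i := hmem j₂ hj'
      omega

lemma dep_eq (a s : Config) (ha : IsConfig a) (hs : IsConfig s) (hfq : FinQ a s) (i : ℤ) :
    dep a s i = queue a s (i - 1) - queue a s i + a i := by
  have hrec := queue_rec a s hfq i
  have hQ0 : 0 ≤ queue a s (i - 1) := queue_nonneg a s hfq (i - 1)
  rcases ha i with h1 | h1 <;> rcases hs i with h2 | h2 <;>
    unfold dep <;> simp only [h1, h2] <;> rw [hrec, h1, h2]
  · norm_num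
    omega
  · rcases eq_or_lt_of_le hQ0 with h | h
    · simp [← h]
    · simp [h]
      omega
  · norm_num
    omega
  · simp
    omega

/-- For configurations with finite queue lengths,
`D(a,s)[j,i] = Q_{j−1}(a,s) − Q_i(a,s) + a[j,i]` for all `j ≤ i`. -/
theorem stmt1 (a s : Config) (ha : IsConfig a) (hs : IsConfig s) (hfq : FinQ a s) :
    ∀ i j : ℤ, j ≤ i →
      cnt (dep a s) j i = queue a s (j - 1) - queue a s i + cnt a j i := by
  intro i j hji
  refine Int.le_induction (motive := fun n _ => cnt (dep a s) j n = queue a s (j - 1) - queue a s n + cnt a j n) ?_ ?_ i hji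
  · show cnt (dep a s) j j = _
    rw [cnt_self, cnt_self, dep_eq a s ha hs hfq j]
  · intro i hji ih
    show cnt (dep a s) j (i + 1) = _
    rw [cnt_succ (dep a s) (by omega), cnt_succ a (by omega), ih,
      dep_eq a s ha hs hfq (i + 1)]
    ring
end

section
/- Fix i ∈ ℤ and n ≥ 2, and let x₁,…,xₙ be configurations such that every pair appearing as (arrivals, services) in the recursive definition of Dⁿ(x₁,…,xₙ) has finite queue lengths. Then Dⁿ_{i,0}(x₁,…,xₙ) ⪯ Dⁿ(x₁,…,xₙ). -/
open scoped BigOperators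

lemma cnt_mono {a' a : Config} (h : ∀ m, a' m ≤ a m) (j k : ℤ) : cnt a' j k ≤ cnt a j k :=
  Finset.sum_le_sum fun m _ => h m

lemma cnt_shift {a : Config} {i : ℤ} (h0 : ∀ m, m < i → a m = 0) (j k : ℤ) :
    cnt a (max j i) k = cnt a j k := by
  unfold cnt
  apply Finset.sum_subset (Finset.Icc_subset_Icc_left (le_max_left j i))
  intro m hm hm'
  simp only [Finset.mem_Icc] at hm hm'
  by_contra hc
  exact hm' ⟨max_le hm.1 (by by_contra h'; exact hc (h0 m (by omega))), hm.2⟩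

lemma trunc_zero {s : Config} {i m : ℤ} (h : m < i) : trunc s i m = 0 := by
  simp [trunc, not_le.2 h]

lemma cnt_trunc (s : Config) (i j k : ℤ) : cnt (trunc s i) j k = cnt s (max j i) k := by
  rw [← cnt_shift (fun m hm => trunc_zero hm) j k]
  apply Finset.sum_congr rfl
  intro m hm
  simp only [Finset.mem_Icc] at hm
  have : i ≤ m := le_trans (le_max_right j i) hm.1
  simp [trunc, this]

lemma bdd_queue {a s : Config} (hfq : FinQ a s) (k : ℤ) :
    BddAbove {q : ℤ | ∃ j ≤ k, q = max (cnt a j k - cnt s j k) 0} := by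
  obtain ⟨b, hb⟩ := hfq k
  refine ⟨max b 0, ?_⟩
  rintro q ⟨j, hj, rfl⟩
  exact max_le_max (hb ⟨j, hj, rfl⟩) le_rfl

lemma queue_trunc_le {a a' s : Config} {i : ℤ}
    (hfq : FinQ a s) (hle : ∀ m, a' m ≤ a m) (h0 : ∀ m, m < i → a' m = 0) (k : ℤ) :
    queue a' (trunc s i) k ≤ queue a s k := by
  unfold queue
  refine csSup_le ⟨max (cnt a' k k - cnt (trunc s i) k k) 0, ⟨k, le_refl k, rfl⟩⟩ ?_
  rintro q ⟨j, hj, rfl⟩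
  by_cases hik : i ≤ k
  · have hjk : max j i ≤ k := max_le hj hik
    have e1 : cnt a' j k = cnt a' (max j i) k := (cnt_shift h0 j k).symm
    have e2 : cnt (trunc s i) j k = cnt s (max j i) k := cnt_trunc s i j k
    calc max (cnt a' j k - cnt (trunc s i) j k) 0
        ≤ max (cnt a (max j i) k - cnt s (max j i) k) 0 := by
          rw [e1, e2]
          exact max_le_max (sub_le_sub_right (cnt_mono hle _ _) _) le_rfl
      _ ≤ sSup {q : ℤ | ∃ j ≤ k, q = max (cnt a j k - cnt s j k) 0} :=
          le_csSup (bdd_queue hfq k) ⟨max j i, hjk, rfl⟩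
  · have ha0 : cnt a' j k = 0 := by
      apply Finset.sum_eq_zero
      intro m hm
      simp only [Finset.mem_Icc] at hm
      exact h0 m (by omega)
    have hs0 : cnt (trunc s i) j k = 0 := by
      apply Finset.sum_eq_zero
      intro m hm
      simp only [Finset.mem_Icc] at hm
      exact trunc_zero (by omega)
    rw [ha0, hs0]
    simp only [sub_zero, max_self]
    calc (0 : ℤ) ≤ max (cnt a k k - cnt s k k) 0 := le_max_right _ _
      _ ≤ _ := le_csSup (bdd_queue hfq k) ⟨k, le_refl k, rfl⟩

lemma dep_trunc_le {a a' s : Config} {i : ℤ}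
    (ha : IsConfig a) (hfq : FinQ a s) (hle : ∀ m, a' m ≤ a m)
    (h0 : ∀ m, m < i → a' m = 0) (k : ℤ) :
    dep a' (trunc s i) k ≤ dep a s k := by
  unfold dep
  split_ifs with h1 h2
  · exact le_refl _
  · exfalso
    apply h2
    obtain ⟨hs, hq⟩ := h1
    have hki : i ≤ k := by
      by_contra h'
      rw [trunc_zero (not_le.1 h')] at hs
      exact absurd hs (by norm_num)
    refine ⟨by rwa [trunc, if_pos hki] at hs, ?_⟩
    rcases hq with hq | hq
    · exact Or.inl (lt_of_lt_of_le hq (queue_trunc_le hfq hle h0 (k - 1)))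
    · right
      have h1 : (1 : ℤ) ≤ a k := hq ▸ hle k
      rcases ha k with h' | h' <;> omega
  · norm_num
  · exact le_refl _

lemma dep_isConfig (a s : Config) : IsConfig (dep a s) := by
  intro k
  unfold dep
  split_ifs <;> simp

lemma dep_zero_below {a' s : Config} {i k : ℤ} (hk : k < i) :
    dep a' (trunc s i) k = 0 := by
  unfold dep
  rw [trunc_zero hk]
  simp

lemma tandem_le (i : ℤ) : ∀ (ss : List Config) (a a' : Config),
    IsConfig a → (∀ m, a' m ≤ a m) → (∀ m, m < i → a' m = 0) →
    TandemFinQ (a :: ss) →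
    ∀ m, Dtandem a' (ss.map (fun c => trunc c i)) m ≤ Dtandem a ss m
  | [], _, _, _, hle, _, _, m => hle m
  | s :: rest, a, a', ha, hle, h0, hfq, m => by
    rw [TandemFinQ] at hfq
    simp only [List.map_cons, Dtandem]
    exact tandem_le i rest (dep a s) (dep a' (trunc s i))
      (dep_isConfig a s)
      (dep_trunc_le ha hfq.1 hle h0)
      (fun k hk => dep_zero_below hk)
      hfq.2 m
/-- `Dⁿ_{i,0}(x₁,…,xₙ) ⪯ Dⁿ(x₁,…,xₙ)` whenever all queue lengths appearing
in the recursive definition of `Dⁿ(x₁,…,xₙ)` are finite. -/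
theorem stmt6 (i : ℤ) (n : ℕ) (hn : 2 ≤ n) (x : Fin n → Config)
    (hx : ∀ k, IsConfig (x k))
    (hfq : TandemFinQ (List.ofFn x)) :
    ∀ m : ℤ, DtandemN (fun k => trunc (x k) i) m ≤ DtandemN x m := by
  obtain ⟨n', rfl⟩ : ∃ n', n = n' + 1 := ⟨n - 1, by omega⟩
  intro m
  have hofn : List.ofFn x = x 0 :: List.ofFn (fun k : Fin n' => x k.succ) := List.ofFn_succ
  have htr : List.ofFn (fun k => trunc (x k) i)
      = (List.ofFn x).map (fun c => trunc c i) := by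
    rw [List.map_ofFn]; rfl
  unfold DtandemN
  rw [htr, hofn]
  simp only [List.map_cons, DtandemList]
  apply tandem_le i _ (x 0) (trunc (x 0) i) (hx 0)
  · intro k
    unfold trunc
    split_ifs
    · exact le_refl _
    · rcases hx 0 k with h | h <;> omega
  · intro k hk
    exact trunc_zero hk
  · rw [← hofn]; exact hfq
end

section
/- Fix integers i ≤ j, n ≥ 2, a real ρ ∈ (0,1), and configurations x₁,…,xₙ, and let fₙ = Dⁿ_{i,0}(x₁,…,xₙ). Then max_{l ∈ [i,j]} ( ρ(l−i+1) − fₙ[i,l] ) ≤ 2 ∑_{k=1}^{n} max_{l ∈ [i,j]} | x_k[i,l] − ρ(l−i+1) |. -/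
open scoped BigOperators

namespace Stmt7Aux

def ZeroBelow (x : Config) (i : ℤ) : Prop := ∀ k, k < i → x k = 0

lemma Icc_eq_Ioc (m l : ℤ) : Finset.Icc m l = Finset.Ioc (m - 1) l := by
  ext k; simp only [Finset.mem_Icc, Finset.mem_Ioc]; omega

lemma cnt_empty (x : Config) {m l : ℤ} (h : l < m) : cnt x m l = 0 := by
  simp [cnt, Finset.Icc_eq_empty_of_lt h]

lemma cnt_nonneg {x : Config} (hx : IsConfig x) (m l : ℤ) : 0 ≤ cnt x m l :=
  Finset.sum_nonneg fun k _ => by rcases hx k with h | h <;> simp [h]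

lemma cnt_split (x : Config) {m p l : ℤ} (h1 : m - 1 ≤ p) (h2 : p ≤ l) :
    cnt x m l = cnt x m p + cnt x (p + 1) l := by
  unfold cnt
  rw [Icc_eq_Ioc m l, Icc_eq_Ioc m p, Icc_eq_Ioc (p + 1) l, add_sub_cancel_right,
    ← Finset.Ioc_union_Ioc_eq_Ioc h1 h2, Finset.sum_union]
  rw [Finset.disjoint_left]
  intro k hk1 hk2
  simp only [Finset.mem_Ioc] at hk1 hk2
  omega

lemma cnt_succ (x : Config) {m l : ℤ} (h : m ≤ l + 1) :
    cnt x m (l + 1) = cnt x m l + x (l + 1) := by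
  rw [cnt_split x (by omega : m - 1 ≤ l) (by omega : l ≤ l + 1)]
  congr 1
  simp [cnt]

lemma cnt_of_zeroBelow {x : Config} {i : ℤ} (hx : ZeroBelow x i) {m l : ℤ} (hm : m ≤ i) :
    cnt x m l = cnt x i l := by
  rcases lt_or_ge l i with h | h
  · unfold cnt
    rw [Finset.sum_eq_zero fun k hk => hx k (by simp only [Finset.mem_Icc] at hk; omega),
      Finset.sum_eq_zero fun k hk => hx k (by simp only [Finset.mem_Icc] at hk; omega)]
  · rcases eq_or_lt_of_le hm with rfl | hm'
    · rfl
    · rw [cnt_split x (by omega : m - 1 ≤ i - 1) (by omega : i - 1 ≤ l)]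
      have : cnt x m (i - 1) = 0 :=
        Finset.sum_eq_zero fun k hk => hx k (by simp only [Finset.mem_Icc] at hk; omega)
      rw [this, sub_add_cancel, zero_add]

section Queue

variable {a s : Config} {i : ℤ}

lemma queue_eq (hza : ZeroBelow a i) (hzs : ZeroBelow s i) {l : ℤ} (hl : i - 1 ≤ l) :
    queue a s l = (Finset.Icc i (l + 1)).sup' (Finset.nonempty_Icc.mpr (by omega))
      (fun m => cnt a m l - cnt s m l) := by
  unfold queue
  set F := (Finset.Icc i (l + 1)).sup' (Finset.nonempty_Icc.mpr (by omega))
      (fun m => cnt a m l - cnt s m l) with hF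
  have hub : ∀ q ∈ {q : ℤ | ∃ j ≤ l, q = max (cnt a j l - cnt s j l) 0}, q ≤ F := by
    rintro q ⟨jj, hj, rfl⟩
    apply max_le
    · rcases le_or_gt i jj with h | h
      · exact Finset.le_sup' (fun m => cnt a m l - cnt s m l) (Finset.mem_Icc.mpr ⟨h, (by omega : jj ≤ l + 1)⟩)
      · rw [cnt_of_zeroBelow hza (le_of_lt h), cnt_of_zeroBelow hzs (le_of_lt h)]
        exact Finset.le_sup' (fun m => cnt a m l - cnt s m l) (Finset.mem_Icc.mpr ⟨le_refl i, (by omega : i ≤ l + 1)⟩)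
    · have h0 : (0 : ℤ) = cnt a (l + 1) l - cnt s (l + 1) l := by
        rw [cnt_empty _ (by omega), cnt_empty _ (by omega)]; ring
      rw [h0]
      exact Finset.le_sup' (fun m => cnt a m l - cnt s m l) (Finset.mem_Icc.mpr ⟨(by omega : i ≤ l + 1), le_refl _⟩)
  have hne : {q : ℤ | ∃ j ≤ l, q = max (cnt a j l - cnt s j l) 0}.Nonempty :=
    ⟨max (cnt a l l - cnt s l l) 0, l, le_refl l, rfl⟩
  have hbdd : BddAbove {q : ℤ | ∃ j ≤ l, q = max (cnt a j l - cnt s j l) 0} := ⟨F, hub⟩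
  apply le_antisymm
  · exact csSup_le hne hub
  · apply Finset.sup'_le
    intro m hm
    rw [Finset.mem_Icc] at hm
    rcases le_or_gt m l with hml | hml
    · calc cnt a m l - cnt s m l ≤ max (cnt a m l - cnt s m l) 0 := le_max_left _ _
        _ ≤ _ := le_csSup hbdd ⟨m, hml, rfl⟩
    · have : m = l + 1 := by omega
      subst this
      rw [cnt_empty _ (by omega), cnt_empty _ (by omega)]
      calc (0 : ℤ) - 0 = 0 := by ring
        _ ≤ max (cnt a l l - cnt s l l) 0 := le_max_right _ _
        _ ≤ _ := le_csSup hbdd ⟨l, le_refl l, rfl⟩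

lemma queue_nonneg (hza : ZeroBelow a i) (hzs : ZeroBelow s i) {l : ℤ} (hl : i - 1 ≤ l) :
    0 ≤ queue a s l := by
  rw [queue_eq hza hzs hl]
  have := Finset.le_sup' (s := Finset.Icc i (l + 1)) (fun m => cnt a m l - cnt s m l)
    (Finset.mem_Icc.mpr ⟨(by omega : i ≤ l + 1), le_refl (l + 1)⟩)
  simp only [cnt_empty a (by omega : l < l + 1), cnt_empty s (by omega : l < l + 1), sub_self] at this
  exact this

lemma queue_init (hza : ZeroBelow a i) (hzs : ZeroBelow s i) :
    queue a s (i - 1) = 0 := by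
  rw [queue_eq hza hzs (le_refl _)]
  have : Finset.Icc i (i - 1 + 1) = {i} := by
    ext k; simp only [Finset.mem_Icc, Finset.mem_singleton]; omega
  rw [Finset.sup'_congr _ this (fun x _ => rfl), Finset.sup'_singleton,
    cnt_empty a (by omega), cnt_empty s (by omega)]
  ring

lemma lindley (hza : ZeroBelow a i) (hzs : ZeroBelow s i) {l : ℤ} (hl : i - 1 ≤ l) :
    queue a s (l + 1) = max (queue a s l + (a (l + 1) - s (l + 1))) 0 := by
  rw [queue_eq hza hzs (by omega : i - 1 ≤ l + 1), queue_eq hza hzs hl]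
  have hins : Finset.Icc i (l + 1 + 1) = insert (l + 1 + 1) (Finset.Icc i (l + 1)) := by
    ext k; simp only [Finset.mem_Icc, Finset.mem_insert]; omega
  have hH : (Finset.Icc i (l + 1)).Nonempty := Finset.nonempty_Icc.mpr (by omega)
  rw [Finset.sup'_congr _ hins (fun x _ => rfl)]
  rw [Finset.sup'_insert (H := hH)]
  have h1 : (Finset.Icc i (l + 1)).sup' hH (fun m => cnt a m (l + 1) - cnt s m (l + 1))
      = (Finset.Icc i (l + 1)).sup' hH
        (fun m => (cnt a m l - cnt s m l) + (a (l + 1) - s (l + 1))) := by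
    apply Finset.sup'_congr _ rfl
    intro m hm
    rw [Finset.mem_Icc] at hm
    rw [cnt_succ a (by omega), cnt_succ s (by omega)]
    ring
  have h2 : (Finset.Icc i (l + 1)).sup' hH
        (fun m => (cnt a m l - cnt s m l) + (a (l + 1) - s (l + 1)))
      = (Finset.Icc i (l + 1)).sup' hH (fun m => cnt a m l - cnt s m l)
        + (a (l + 1) - s (l + 1)) := by
    rw [Finset.comp_sup'_eq_sup'_comp hH (fun q => q + (a (l + 1) - s (l + 1)))
      (fun x y => (max_add_add_right x y _).symm)]
    rfl
  rw [h1, h2, cnt_empty a (by omega), cnt_empty s (by omega)]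
  rw [show (0 : ℤ) - 0 = 0 by ring, sup_comm]

lemma dep_isConfig : IsConfig (dep a s) := fun k => by
  unfold dep; split_ifs <;> simp

lemma dep_zeroBelow (hzs : ZeroBelow s i) : ZeroBelow (dep a s) i := by
  intro k hk
  have h0 := hzs k hk
  unfold dep
  simp [h0]

lemma dep_cnt (ha : IsConfig a) (hs : IsConfig s) (hza : ZeroBelow a i) (hzs : ZeroBelow s i) :
    ∀ l, i - 1 ≤ l → cnt (dep a s) i l = cnt a i l - queue a s l := by
  intro l hl
  refine Int.le_induction
    (motive := fun l _ => cnt (dep a s) i l = cnt a i l - queue a s l) ?_ ?_ l hl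
  · show cnt (dep a s) i (i - 1) = cnt a i (i - 1) - queue a s (i - 1)
    rw [cnt_empty _ (by omega), cnt_empty _ (by omega), queue_init hza hzs]
    ring
  · intro l hl IH
    show cnt (dep a s) i (l + 1) = cnt a i (l + 1) - queue a s (l + 1)
    have hd : dep a s (l + 1) = if s (l + 1) = 1 ∧ (0 < queue a s l ∨ a (l + 1) = 1)
        then 1 else 0 := by
      unfold dep
      rw [add_sub_cancel_right]
    rw [cnt_succ (dep a s) (by omega), cnt_succ a (by omega), IH,
      lindley hza hzs hl, hd]
    have hQ := queue_nonneg hza hzs hl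
    rcases ha (l + 1) with h1 | h1 <;> rcases hs (l + 1) with h2 | h2 <;>
      rw [h1, h2] <;> split_ifs <;> omega

lemma dep_cnt_lb (ha : IsConfig a) (hs : IsConfig s) (hza : ZeroBelow a i)
    (hzs : ZeroBelow s i) {l : ℤ} (hl : i ≤ l) :
    ∃ m, i - 1 ≤ m ∧ m ≤ l ∧ cnt a i m + cnt s (m + 1) l ≤ cnt (dep a s) i l := by
  classical
  set Z := (Finset.Icc (i - 1) l).filter (fun k => queue a s k = 0) with hZ
  have hmem : ∀ k, k ∈ Z ↔ (i - 1 ≤ k ∧ k ≤ l ∧ queue a s k = 0) := by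
    intro k
    rw [hZ, Finset.mem_filter, Finset.mem_Icc, and_assoc]
  have hmemZ : i - 1 ∈ Z := (hmem _).mpr ⟨le_refl _, by omega, queue_init hza hzs⟩
  have hZne : Z.Nonempty := ⟨_, hmemZ⟩
  obtain ⟨m, hmZ, hmax'⟩ : ∃ m ∈ Z, ∀ k ∈ Z, k ≤ m :=
    ⟨Z.max' hZne, Z.max'_mem hZne, fun k hk => Z.le_max' k hk⟩
  obtain ⟨hm1, hm2, hQm⟩ := (hmem m).mp hmZ
  have hmax : ∀ k, m < k → k ≤ l → queue a s k ≠ 0 := by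
    intro k hk1 hk2 hq
    have hkZ : k ∈ Z := (hmem k).mpr ⟨by omega, hk2, hq⟩
    have := hmax' k hkZ
    omega
  refine ⟨m, hm1, hm2, ?_⟩
  rcases eq_or_lt_of_le hm2 with rfl | hml
  · rw [cnt_empty s (by omega), dep_cnt ha hs hza hzs _ (by omega), hQm]
    omega
  · have hQm1pos : 0 < queue a s (m + 1) := by
      have hne := hmax (m + 1) (by omega) (by omega)
      have := queue_nonneg hza hzs (show i - 1 ≤ m + 1 by omega)
      omega
    have hrec := lindley hza hzs (show i - 1 ≤ m by omega)
    rw [hQm] at hrec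
    have hs1 : s (m + 1) = 0 := by
      rcases ha (m + 1) with h1 | h1 <;> rcases hs (m + 1) with h2 | h2 <;> omega
    have hds : ∀ k, m + 1 + 1 ≤ k → k ≤ l → dep a s k = s k := by
      intro k hk1 hk2
      have hQpos : 0 < queue a s (k - 1) := by
        have hne := hmax (k - 1) (by omega) (by omega)
        have hnn := queue_nonneg hza hzs (show i - 1 ≤ k - 1 by omega)
        omega
      rcases hs k with h2 | h2
      · unfold dep; simp [h2]
      · unfold dep; simp [h2, hQpos]
    have hsplit : cnt (dep a s) i l
        = cnt (dep a s) i (m + 1) + cnt (dep a s) (m + 1 + 1) l :=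
      cnt_split (dep a s) (by omega) (by omega)
    have hcongr : cnt (dep a s) (m + 1 + 1) l = cnt s (m + 1 + 1) l :=
      Finset.sum_congr rfl fun k hk => by
        rw [Finset.mem_Icc] at hk
        exact hds k hk.1 hk.2
    have hs2 : cnt s (m + 1) l = cnt s (m + 1) (m + 1) + cnt s (m + 1 + 1) l :=
      cnt_split s (by omega) (by omega)
    have hs3 : cnt s (m + 1) (m + 1) = 0 := by
      unfold cnt
      rw [Finset.Icc_self, Finset.sum_singleton, hs1]
    have h3 : cnt (dep a s) i (m + 1) = cnt (dep a s) i m + dep a s (m + 1) :=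
      cnt_succ _ (by omega)
    have h4 : cnt (dep a s) i m = cnt a i m - queue a s m :=
      dep_cnt ha hs hza hzs m (by omega)
    have h5 : 0 ≤ dep a s (m + 1) := by
      rcases dep_isConfig (a := a) (s := s) (m + 1) with h | h <;> omega
    omega

end Queue

section RealPart

noncomputable def Gf (i j : ℤ) (hij : i ≤ j) (ρ : ℝ) (y : Config) : ℝ :=
  (Finset.Icc i j).sup' (Finset.nonempty_Icc.mpr hij)
    fun l => ρ * ((l : ℝ) - (i : ℝ) + 1) - (cnt y i l : ℝ)

noncomputable def Mf (i j : ℤ) (hij : i ≤ j) (ρ : ℝ) (y : Config) : ℝ :=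
  (Finset.Icc i j).sup' (Finset.nonempty_Icc.mpr hij)
    fun l => |(cnt y i l : ℝ) - ρ * ((l : ℝ) - (i : ℝ) + 1)|

variable {i j : ℤ} (hij : i ≤ j) {ρ : ℝ} {a s y : Config}

lemma le_Mf {l : ℤ} (hl : l ∈ Finset.Icc i j) :
    |(cnt y i l : ℝ) - ρ * ((l : ℝ) - (i : ℝ) + 1)| ≤ Mf i j hij ρ y := by
  unfold Mf
  exact Finset.le_sup' (fun l : ℤ => |(cnt y i l : ℝ) - ρ * ((l : ℝ) - (i : ℝ) + 1)|) hl

lemma le_Gf {l : ℤ} (hl : l ∈ Finset.Icc i j) :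
    ρ * ((l : ℝ) - (i : ℝ) + 1) - (cnt y i l : ℝ) ≤ Gf i j hij ρ y := by
  unfold Gf
  exact Finset.le_sup' (fun l : ℤ => ρ * ((l : ℝ) - (i : ℝ) + 1) - (cnt y i l : ℝ)) hl

lemma Mf_nonneg : 0 ≤ Mf i j hij ρ y :=
  le_trans (abs_nonneg _) (le_Mf hij (Finset.mem_Icc.mpr ⟨le_refl i, hij⟩))

lemma Gf_le_Mf : Gf i j hij ρ y ≤ Mf i j hij ρ y := by
  apply Finset.sup'_le
  intro l hl
  calc ρ * ((l : ℝ) - (i : ℝ) + 1) - (cnt y i l : ℝ)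
      ≤ |(cnt y i l : ℝ) - ρ * ((l : ℝ) - (i : ℝ) + 1)| := by
        rw [abs_sub_comm]; exact le_abs_self _
    _ ≤ _ := le_Mf hij hl

lemma step (ha : IsConfig a) (hs : IsConfig s) (hza : ZeroBelow a i)
    (hzs : ZeroBelow s i) :
    Gf i j hij ρ (dep a s) ≤ max (Gf i j hij ρ a) 0 + 2 * Mf i j hij ρ s := by
  apply Finset.sup'_le
  intro l hl
  rw [Finset.mem_Icc] at hl
  obtain ⟨m, hm1, hm2, hm3⟩ := dep_cnt_lb ha hs hza hzs hl.1
  have hsplit : cnt s i l = cnt s i m + cnt s (m + 1) l := cnt_split s (by omega) hm2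
  have key : ρ * ((l : ℝ) - (i : ℝ) + 1) - (cnt (dep a s) i l : ℝ)
      ≤ (ρ * ((m : ℝ) - (i : ℝ) + 1) - (cnt a i m : ℝ))
        + ((ρ * ((l : ℝ) - (i : ℝ) + 1) - (cnt s i l : ℝ))
          - (ρ * ((m : ℝ) - (i : ℝ) + 1) - (cnt s i m : ℝ))) := by
    have h3 : ((cnt a i m : ℤ) : ℝ) + ((cnt s (m + 1) l : ℤ) : ℝ)
        ≤ ((cnt (dep a s) i l : ℤ) : ℝ) := by exact_mod_cast hm3
    have h4 : ((cnt s i l : ℤ) : ℝ) = (cnt s i m : ℝ) + (cnt s (m + 1) l : ℝ) := by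
      exact_mod_cast hsplit
    linarith
  have t1 : ρ * ((m : ℝ) - (i : ℝ) + 1) - (cnt a i m : ℝ) ≤ max (Gf i j hij ρ a) 0 := by
    rcases eq_or_lt_of_le hm1 with rfl | hmi
    · have e : ρ * (((i - 1 : ℤ) : ℝ) - (i : ℝ) + 1) - (cnt a i (i - 1) : ℝ) = 0 := by
        rw [cnt_empty a (by omega)]
        push_cast
        ring
      rw [e]
      exact le_max_right _ _
    · refine le_trans ?_ (le_max_left _ _)
      exact le_Gf hij (Finset.mem_Icc.mpr ⟨by omega, by omega⟩)
  have t2m : (cnt s i m : ℝ) - ρ * ((m : ℝ) - (i : ℝ) + 1) ≤ Mf i j hij ρ s := by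
    rcases eq_or_lt_of_le hm1 with rfl | hmi
    · have e : (cnt s i (i - 1) : ℝ) - ρ * (((i - 1 : ℤ) : ℝ) - (i : ℝ) + 1) = 0 := by
        rw [cnt_empty s (by omega)]
        push_cast
        ring
      rw [e]
      exact Mf_nonneg hij
    · calc (cnt s i m : ℝ) - ρ * ((m : ℝ) - (i : ℝ) + 1)
          ≤ |(cnt s i m : ℝ) - ρ * ((m : ℝ) - (i : ℝ) + 1)| := le_abs_self _
        _ ≤ _ := le_Mf hij (Finset.mem_Icc.mpr ⟨by omega, by omega⟩)
  have t2l : ρ * ((l : ℝ) - (i : ℝ) + 1) - (cnt s i l : ℝ) ≤ Mf i j hij ρ s := by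
    calc ρ * ((l : ℝ) - (i : ℝ) + 1) - (cnt s i l : ℝ)
        ≤ |(cnt s i l : ℝ) - ρ * ((l : ℝ) - (i : ℝ) + 1)| := by
          rw [abs_sub_comm]; exact le_abs_self _
      _ ≤ _ := le_Mf hij (Finset.mem_Icc.mpr ⟨hl.1, hl.2⟩)
  linarith

lemma tandem (ss : List Config) :
    ∀ a : Config, IsConfig a → ZeroBelow a i → (∀ t ∈ ss, IsConfig t ∧ ZeroBelow t i) →
      Gf i j hij ρ (Dtandem a ss)
        ≤ max (Gf i j hij ρ a) 0 + 2 * (ss.map (Mf i j hij ρ)).sum := by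
  induction ss with
  | nil =>
    intro a _ _ _
    show Gf i j hij ρ a ≤ max (Gf i j hij ρ a) 0 + 2 * ([] : List ℝ).sum
    simp
  | cons t ss ih =>
    intro a ha hza hts
    have ht1 := (hts t (by simp)).1
    have ht2 := (hts t (by simp)).2
    have h1 := ih (dep a t) dep_isConfig (dep_zeroBelow ht2)
      (fun u hu => hts u (by simp [hu]))
    have h2 := step (ρ := ρ) hij ha ht1 hza ht2
    have h3 : 0 ≤ Mf i j hij ρ t := Mf_nonneg hij
    have h4 : (0 : ℝ) ≤ max (Gf i j hij ρ a) 0 := le_max_right _ _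
    have h5 : max (Gf i j hij ρ (dep a t)) 0
        ≤ max (Gf i j hij ρ a) 0 + 2 * Mf i j hij ρ t :=
      max_le h2 (by linarith)
    show Gf i j hij ρ (Dtandem (dep a t) ss)
      ≤ max (Gf i j hij ρ a) 0 + 2 * ((t :: ss).map (Mf i j hij ρ)).sum
    rw [List.map_cons, List.sum_cons]
    calc Gf i j hij ρ (Dtandem (dep a t) ss)
        ≤ max (Gf i j hij ρ (dep a t)) 0 + 2 * (ss.map (Mf i j hij ρ)).sum := h1
      _ ≤ _ := by linarith

lemma cnt_trunc (x : Config) (l : ℤ) : cnt (trunc x i) i l = cnt x i l :=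
  Finset.sum_congr rfl fun k hk => by
    rw [Finset.mem_Icc] at hk
    simp [trunc, hk.1]

lemma trunc_isConfig {x : Config} (hx : IsConfig x) : IsConfig (trunc x i) := by
  intro k
  unfold trunc
  split_ifs
  · exact hx k
  · exact Or.inl rfl

lemma trunc_zeroBelow (x : Config) : ZeroBelow (trunc x i) i := by
  intro k hk
  simp [trunc, not_le.mpr hk]

lemma Gf_trunc (x : Config) : Gf i j hij ρ (trunc x i) = Gf i j hij ρ x :=
  Finset.sup'_congr _ rfl fun l _ => by rw [cnt_trunc]

lemma Mf_trunc (x : Config) : Mf i j hij ρ (trunc x i) = Mf i j hij ρ x :=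
  Finset.sup'_congr _ rfl fun l _ => by rw [cnt_trunc]

end RealPart

end Stmt7Aux

open Stmt7Aux

/-- With `fₙ = Dⁿ_{i,0}(x₁,…,xₙ)`,
`max_{l ∈ [i,j]} (ρ(l−i+1) − fₙ[i,l]) ≤ 2 ∑_{k=1}^n max_{l ∈ [i,j]} |x_k[i,l] − ρ(l−i+1)|`. -/
theorem stmt7 (i j : ℤ) (hij : i ≤ j) (n : ℕ) (hn : 2 ≤ n)
    (ρ : ℝ) (hρ0 : 0 < ρ) (hρ1 : ρ < 1)
    (x : Fin n → Config) (hx : ∀ k, IsConfig (x k)) :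
    (Finset.Icc i j).sup' (Finset.nonempty_Icc.mpr hij)
        (fun l => ρ * ((l : ℝ) - (i : ℝ) + 1)
          - (cnt (DtandemN fun k => trunc (x k) i) i l : ℝ))
      ≤ 2 * ∑ k : Fin n, (Finset.Icc i j).sup' (Finset.nonempty_Icc.mpr hij)
          (fun l => |(cnt (x k) i l : ℝ) - ρ * ((l : ℝ) - (i : ℝ) + 1)|) := by
  obtain ⟨m', rfl⟩ : ∃ m', n = m' + 1 := ⟨n - 1, by omega⟩
  show Gf i j hij ρ (DtandemN fun k => trunc (x k) i)
      ≤ 2 * ∑ k : Fin (m' + 1), Mf i j hij ρ (x k)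
  have hofn : (DtandemN fun k : Fin (m' + 1) => trunc (x k) i)
      = Dtandem (trunc (x 0) i) (List.ofFn fun k : Fin m' => trunc (x k.succ) i) := by
    rw [DtandemN, List.ofFn_succ]
    rfl
  rw [hofn]
  have htd := tandem (ρ := ρ) hij (List.ofFn fun k : Fin m' => trunc (x k.succ) i)
    (trunc (x 0) i) (trunc_isConfig (hx 0)) (trunc_zeroBelow _)
    (by
      intro t ht
      rw [List.mem_ofFn] at ht
      obtain ⟨k, rfl⟩ := ht
      exact ⟨trunc_isConfig (hx _), trunc_zeroBelow _⟩)
  have hsum : ((List.ofFn fun k : Fin m' => trunc (x k.succ) i).map (Mf i j hij ρ)).sum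
      = ∑ k : Fin m', Mf i j hij ρ (x k.succ) := by
    rw [List.map_ofFn, List.sum_ofFn]
    exact Finset.sum_congr rfl fun k _ => Mf_trunc hij (x k.succ)
  rw [hsum] at htd
  have hG : max (Gf i j hij ρ (trunc (x 0) i)) 0 ≤ Mf i j hij ρ (x 0) := by
    rw [Gf_trunc hij]
    exact max_le (Gf_le_Mf hij) (Mf_nonneg hij)
  have hM0 : (0 : ℝ) ≤ Mf i j hij ρ (x 0) := Mf_nonneg hij
  have hrhs : ∑ k : Fin (m' + 1), Mf i j hij ρ (x k)
      = Mf i j hij ρ (x 0) + ∑ k : Fin m', Mf i j hij ρ (x k.succ) :=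
    Fin.sum_univ_succ _
  rw [hrhs]
  linarith
end

section
/- Let n ≥ 1 and let x₁,…,xₙ be configurations such that all queue-length suprema arising in the definitions of the multiclass maps F_m and of all tandem departure maps below are finite. Let vₙ = Vₙ(x₁,…,xₙ), and define d^{n,m} = D^{n−m+1}(x_m, x_{m+1},…,xₙ) for 1 ≤ m ≤ n−1 and d^{n,n} = xₙ. Then for all integers i ≤ j and every m ∈ {1,…,n}, Cls^{[i,j]}_m(vₙ) = d^{n,m}[i,j]. -/
open scoped BigOperators

/-- A multiclass configuration: value `k ∈ {1,2,…}` is a customer of class `k`,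
`⊤ = ∞` is an empty slot. -/
abbrev MConfig := ℤ → ℕ∞

/-- `Cls^{[i,j]}_k(v) = #{l ∈ [i,j] : v(l) ≤ k}` (also `a^{≤k}[i,j]` for arrivals). -/
noncomputable def mcnt (v : MConfig) (k : ℕ) (i j : ℤ) : ℤ :=
  (((Finset.Icc i j).filter fun l => v l ≤ (k : ℕ∞)).card : ℤ)

/-- `Q^{≤k}_i(a,s) = sup_{j ≤ i} max(a^{≤k}[j,i] − s[j,i], 0)`. -/
noncomputable def mqueue (a : MConfig) (s : Config) (k : ℕ) (i : ℤ) : ℤ :=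
  sSup {q : ℤ | ∃ j ≤ i, q = max (mcnt a k j i - cnt s j i) 0}

/-- The multiclass departure map `F_m(a,s)`: at a service time, the highest-priority
(lowest-label) available class in `{1,…,m}` departs; an unused service becomes a
departure of class `m+1`; no service means an empty slot. -/
noncomputable def Fm (m : ℕ) (a : MConfig) (s : Config) : MConfig := fun i =>
  if s i = 1 then
    ((sInf ({k : ℕ | 1 ≤ k ∧ k ≤ m ∧
        (0 < mqueue a s k (i - 1) ∨ a i ≤ (k : ℕ∞))} ∪ {m + 1}) : ℕ) : ℕ∞)
  else ⊤

/-- A configuration viewed as a multiclass configuration of order 1. -/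
def toM (x : Config) : MConfig := fun i => if x i = 1 then 1 else ⊤

/-- `Vn m v [s₁,…,s_k]` iterates `v ↦ F_m(v,s)`: with `v = v_m` of order `m` it produces
`v_{m+k}`.  In particular `Vn 1 (toM x₁) [x₂,…,xₙ] = Vₙ(x₁,…,xₙ)`. -/
noncomputable def Vn : ℕ → MConfig → List Config → MConfig
  | _, v, [] => v
  | m, v, s :: rest => Vn (m + 1) (Fm m v s) rest

/-- All queue-length suprema arising in the iteration of the multiclass maps `F_m`
are finite. -/
def VFinQ : ℕ → MConfig → List Config → Prop
  | _, _, [] => True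
  | m, v, s :: rest =>
      (∀ k : ℕ, ∀ i : ℤ, BddAbove {q : ℤ | ∃ j ≤ i, q = mcnt v k j i - cnt s j i})
        ∧ VFinQ (m + 1) (Fm m v s) rest

/-! ### Auxiliary machinery for the proof -/

/-- Indicator configuration of customers of class `≤ k`. -/
noncomputable def ind (v : MConfig) (k : ℕ) : Config :=
  fun i => if v i ≤ (k : ℕ∞) then 1 else 0

lemma mcnt_eq_cnt (v : MConfig) (k : ℕ) (i j : ℤ) :
    mcnt v k i j = cnt (ind v k) i j := by
  classical
  simp only [mcnt, cnt, ind, Finset.card_filter]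
  push_cast
  refine Finset.sum_congr rfl fun l _ => ?_
  split <;> simp

lemma mqueue_eq_queue (v : MConfig) (s : Config) (k : ℕ) (i : ℤ) :
    mqueue v s k i = queue (ind v k) s i := by
  simp only [mqueue, queue, mcnt_eq_cnt]

lemma mcnt_mono (v : MConfig) {k k' : ℕ} (h : k' ≤ k) (j i : ℤ) :
    mcnt v k' j i ≤ mcnt v k j i := by
  classical
  unfold mcnt
  have : ((Finset.Icc j i).filter fun l => v l ≤ (k' : ℕ∞)) ⊆
      ((Finset.Icc j i).filter fun l => v l ≤ (k : ℕ∞)) := by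
    intro l hl
    simp only [Finset.mem_filter] at hl ⊢
    exact ⟨hl.1, le_trans hl.2 (by exact_mod_cast Nat.cast_le.mpr h)⟩
  exact_mod_cast Finset.card_le_card this

lemma mqueue_pos_mono {v : MConfig} {s : Config} {k k' : ℕ} (hkk : k' ≤ k) (i : ℤ)
    (hbdd : BddAbove {q : ℤ | ∃ j ≤ i, q = mcnt v k j i - cnt s j i})
    (h : 0 < mqueue v s k' i) : 0 < mqueue v s k i := by
  have hne : {q : ℤ | ∃ j ≤ i, q = max (mcnt v k' j i - cnt s j i) 0}.Nonempty :=
    ⟨_, ⟨i, le_refl i, rfl⟩⟩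
  obtain ⟨q, ⟨j, hj, rfl⟩, hq⟩ := exists_lt_of_lt_csSup hne h
  have hq' : 0 < mcnt v k' j i - cnt s j i := by
    rcases lt_max_iff.mp hq with h' | h'
    · exact h'
    · exact absurd h' (lt_irrefl 0)
  have hk2 : 0 < max (mcnt v k j i - cnt s j i) 0 :=
    lt_max_iff.mpr (Or.inl (lt_of_lt_of_le hq' (by
      have := mcnt_mono v hkk j i; omega)))
  have hbdd' : BddAbove {q : ℤ | ∃ j ≤ i, q = max (mcnt v k j i - cnt s j i) 0} := by
    obtain ⟨B, hB⟩ := hbdd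
    refine ⟨max B 0, ?_⟩
    rintro q ⟨j', hj', rfl⟩
    exact max_le_max (hB ⟨j', hj', rfl⟩) le_rfl
  calc 0 < max (mcnt v k j i - cnt s j i) 0 := hk2
    _ ≤ mqueue v s k i := le_csSup hbdd' ⟨j, hj, rfl⟩

lemma ind_Fm_eq (m k : ℕ) (h1 : 1 ≤ k) (hk : k ≤ m) (v : MConfig) (s : Config)
    (hbdd : ∀ k : ℕ, ∀ i : ℤ,
      BddAbove {q : ℤ | ∃ j ≤ i, q = mcnt v k j i - cnt s j i}) :
    ind (Fm m v s) k = dep (ind v k) s := by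
  classical
  funext i
  show (if Fm m v s i ≤ (k : ℕ∞) then (1:ℤ) else 0)
      = if s i = 1 ∧ (0 < queue (ind v k) s (i - 1) ∨ ind v k i = 1) then 1 else 0
  by_cases hs : s i = 1
  · have hFm : Fm m v s i = ((sInf ({k' : ℕ | 1 ≤ k' ∧ k' ≤ m ∧
        (0 < mqueue v s k' (i - 1) ∨ v i ≤ (k' : ℕ∞))} ∪ {m + 1}) : ℕ) : ℕ∞) := by
      simp [Fm, hs]
    set S := {k' : ℕ | 1 ≤ k' ∧ k' ≤ m ∧
        (0 < mqueue v s k' (i - 1) ∨ v i ≤ (k' : ℕ∞))} ∪ {m + 1} with hS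
    have hne : S.Nonempty := ⟨m + 1, Or.inr rfl⟩
    have hmem : sInf S ∈ S := Nat.sInf_mem hne
    have hcond_iff : (Fm m v s i ≤ (k : ℕ∞)) ↔
        (0 < mqueue v s k (i - 1) ∨ v i ≤ (k : ℕ∞)) := by
      rw [hFm, Nat.cast_le]
      constructor
      · intro hle
        rcases hmem with hmem | hmem
        · obtain ⟨_, _, hc⟩ := hmem
          rcases hc with hc | hc
          · exact Or.inl (mqueue_pos_mono hle (i - 1) (hbdd k (i - 1)) hc)
          · exact Or.inr (le_trans hc (by exact_mod_cast Nat.cast_le.mpr hle))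
        · have : sInf S = m + 1 := hmem
          omega
      · intro hc
        exact Nat.sInf_le (Or.inl ⟨h1, hk, hc⟩)
    have hind : (ind v k i = 1) ↔ v i ≤ (k : ℕ∞) := by
      unfold ind; split <;> simp_all
    rw [← mqueue_eq_queue]
    by_cases hc : 0 < mqueue v s k (i - 1) ∨ v i ≤ (k : ℕ∞)
    · rw [if_pos (hcond_iff.mpr hc), if_pos ⟨hs, by rwa [hind]⟩]
    · rw [if_neg (fun h => hc (hcond_iff.mp h)),
        if_neg (fun h => hc (h.2.imp id hind.mp))]
  · have : Fm m v s i = ⊤ := by simp [Fm, hs]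
    rw [this, if_neg (by simp), if_neg (by tauto)]

lemma ind_Fm_top (m : ℕ) (v : MConfig) (s : Config) (hs : IsConfig s) :
    ind (Fm m v s) (m + 1) = s := by
  classical
  funext i
  show (if Fm m v s i ≤ ((m + 1 : ℕ) : ℕ∞) then (1:ℤ) else 0) = s i
  rcases hs i with h0 | h1
  · have hFm : Fm m v s i = ⊤ := by simp [Fm, h0]
    have hne : ¬ ((⊤ : ℕ∞) ≤ ((m + 1 : ℕ) : ℕ∞)) := fun h =>
      absurd (top_le_iff.mp h) (ENat.coe_ne_top (m + 1))
    rw [hFm, if_neg hne, h0]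
  · have hFm : Fm m v s i = ((sInf ({k' : ℕ | 1 ≤ k' ∧ k' ≤ m ∧
        (0 < mqueue v s k' (i - 1) ∨ v i ≤ (k' : ℕ∞))} ∪ {m + 1}) : ℕ) : ℕ∞) := by
      simp [Fm, h1]
    rw [hFm, if_pos (by exact_mod_cast Nat.sInf_le (Or.inr rfl)), h1]

lemma ind_toM (x : Config) (hx : IsConfig x) : ind (toM x) 1 = x := by
  classical
  funext i
  rcases hx i with h0 | h1
  · have : toM x i = ⊤ := by simp [toM, h0]
    simp [ind, this, h0]
  · have : toM x i = 1 := by simp [toM, h1]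
    simp [ind, this, h1]

lemma key : ∀ (L : List Config) (m : ℕ) (v : MConfig),
    (∀ s ∈ L, IsConfig s) → VFinQ m v L →
    (∀ k, 1 ≤ k → k ≤ m → ind (Vn m v L) k = Dtandem (ind v k) L) ∧
    (∀ t s rest, L.drop t = s :: rest →
      ind (Vn m v L) (m + t + 1) = Dtandem s rest)
  | [], m, v, _, _ => by
      constructor
      · intro k _ _; rfl
      · intro t s rest h; simp at h
  | s :: rest, m, v, hIs, hFin => by
      obtain ⟨hbdd, hFin'⟩ := hFin
      have hIs' : ∀ u ∈ rest, IsConfig u := fun u hu => hIs u (List.mem_cons_of_mem _ hu)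
      have IH := key rest (m + 1) (Fm m v s) hIs' hFin'
      constructor
      · intro k hk1 hk2
        have h1 : ind (Vn m v (s :: rest)) k = ind (Vn (m + 1) (Fm m v s) rest) k := rfl
        rw [h1, IH.1 k hk1 (le_trans hk2 (Nat.le_succ m)),
          ind_Fm_eq m k hk1 hk2 v s hbdd]
        rfl
      · intro t s' rest' hdrop
        cases t with
        | zero =>
          simp only [List.drop_zero, List.cons.injEq] at hdrop
          obtain ⟨rfl, rfl⟩ := hdrop
          show ind (Vn (m + 1) (Fm m v s) rest) (m + 0 + 1) = Dtandem s rest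
          rw [show m + 0 + 1 = m + 1 by ring,
            IH.1 (m + 1) (by omega) le_rfl,
            ind_Fm_top m v s (hIs s List.mem_cons_self)]
        | succ t' =>
          have hd : (s :: rest).drop (t' + 1) = rest.drop t' := rfl
          rw [hd] at hdrop
          show ind (Vn (m + 1) (Fm m v s) rest) (m + (t' + 1) + 1) = Dtandem s' rest'
          rw [show m + (t' + 1) + 1 = (m + 1) + t' + 1 by ring]
          exact IH.2 t' s' rest' hdrop

/-- With `vₙ = Vₙ(x₁,…,xₙ)` and `d^{n,m} = D^{n−m+1}(x_m,…,xₙ)`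
(`d^{n,n} = xₙ`), for all `i ≤ j` and `1 ≤ m ≤ n`, `Cls^{[i,j]}_m(vₙ) = d^{n,m}[i,j]`. -/
theorem stmt13 (n : ℕ) (hn : 1 ≤ n) (x : Fin n → Config) (hx : ∀ k, IsConfig (x k))
    (hV : VFinQ 1 (toM (x ⟨0, hn⟩)) ((List.ofFn x).drop 1))
    (hD : ∀ m : ℕ, TandemFinQ ((List.ofFn x).drop m)) :
    ∀ i j : ℤ, i ≤ j → ∀ m : ℕ, 1 ≤ m → m ≤ n →
      mcnt (Vn 1 (toM (x ⟨0, hn⟩)) ((List.ofFn x).drop 1)) m i j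
        = cnt (DtandemList ((List.ofFn x).drop (m - 1))) i j := by
  intro i j _ m hm1 hmn
  have hIs : ∀ s ∈ (List.ofFn x).drop 1, IsConfig s := by
    intro s hs
    have hmem : s ∈ List.ofFn x := List.mem_of_mem_drop hs
    rw [List.mem_ofFn] at hmem
    obtain ⟨k, rfl⟩ := hmem
    exact hx k
  have hkey := key ((List.ofFn x).drop 1) 1 (toM (x ⟨0, hn⟩)) hIs hV
  rw [mcnt_eq_cnt]
  congr 1
  have hlen : (List.ofFn x).length = n := List.length_ofFn
  have hlt : m - 1 < (List.ofFn x).length := by rw [hlen]; omega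
  have hd := List.drop_eq_getElem_cons (l := List.ofFn x) hlt
  rw [show m - 1 + 1 = m by omega] at hd
  rcases eq_or_lt_of_le hm1 with h1 | h2
  · -- m = 1
    subst h1
    rw [hkey.1 1 le_rfl le_rfl, ind_toM _ (hx _), hd]
    show Dtandem (x ⟨0, hn⟩) ((List.ofFn x).drop 1)
        = Dtandem ((List.ofFn x)[1 - 1]) ((List.ofFn x).drop 1)
    congr 1
    rw [List.getElem_ofFn]
  · -- 2 ≤ m
    have hm2 : 2 ≤ m := h2
    have hdrop2 : ((List.ofFn x).drop 1).drop (m - 2) = (List.ofFn x).drop (m - 1) := by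
      rw [List.drop_drop]
      congr 1
      omega
    have hstep := hkey.2 (m - 2) ((List.ofFn x)[m - 1]) ((List.ofFn x).drop m)
      (by rw [hdrop2, hd])
    rw [show 1 + (m - 2) + 1 = m by omega] at hstep
    rw [hstep, hd]
    rfl
end
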